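/- Assume θ > θ1, θ > θ2, α > 1/(K h), and c2 < c < c1 (so G > 0 and H > 0). Let s > 0, m ∈ (0,1], S = s^m/(m Γ(m)), s₄ = (m Γ(m) G/H)^{1/m}, and s₅ = (2 m Γ(m)/G)^{1/m}. If 0 < s < min(s₄, s₅), then 1 - (1 - S G + S² H) > 0, 1 - (2 - S G) + (1 - S G + S² H) > 0, and 1 + (2 - S G) + (1 - S G + S² H) > 0; consequently every complex root λ of λ² - (2 - S G) λ + (1 - S G + S² H) = 0 satisfies |λ| < 1. -/

import Mathlib

lemma jury_aux (T D : ℝ) (hD1 : D < 1) (hp1 : 1 - T + D > 0) (hpm1 : 1 + T + D > 0) :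
    ∀ z : ℂ, z ^ 2 - (T : ℂ) * z + (D : ℂ) = 0 → ‖z‖ < 1 := by
  intro z hz
  set x := z.re with hx
  set y := z.im with hy
  have hre : x ^ 2 - y ^ 2 - T * x + D = 0 := by
    have h := congrArg Complex.re hz
    simp [pow_two, Complex.mul_re, Complex.mul_im] at h
    nlinarith [h]
  have him : 2 * x * y - T * y = 0 := by
    have h := congrArg Complex.im hz
    simp [pow_two, Complex.mul_re, Complex.mul_im] at h
    nlinarith [h]
  have hsq : x ^ 2 + y ^ 2 < 1 := by
    rcases eq_or_ne y 0 with hy0 | hy0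
    · rw [hy0] at hre ⊢
      have hDeq : x * (T - x) = D := by linear_combination -hre
      have e1 : (1 - x) * (1 - (T - x)) = 1 - T + D := by linear_combination -hre
      have e2 : (1 + x) * (1 + (T - x)) = 1 + T + D := by linear_combination -hre
      have hA : (1 - x) * (1 - (T - x)) > 0 := by rw [e1]; exact hp1
      have hB : (1 + x) * (1 + (T - x)) > 0 := by rw [e2]; exact hpm1
      have hxlt : x < 1 := by nlinarith [hA, hDeq, hD1, sq_nonneg (x - 1)]
      have hxgt : -1 < x := by nlinarith [hB, hDeq, hD1, sq_nonneg (x + 1)]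
      nlinarith [hxlt, hxgt]
    · have hxT : x = T / 2 := by
        have h0 : y * (2 * x - T) = 0 := by nlinarith [him]
        rcases mul_eq_zero.mp h0 with h | h
        · exact absurd h hy0
        · linarith
      nlinarith [hre, hD1]
  have habs : ‖z‖ ^ 2 = x ^ 2 + y ^ 2 := by
    rw [Complex.sq_norm, Complex.normSq_apply]; ring
  nlinarith [norm_nonneg z, habs, hsq]

/-- Under θ > θ₁, θ > θ₂, α > 1/(Kh), c₂ < c < c₁ and 0 < s < min(s₄, s₅),
the Jury conditions hold for the characteristic polynomial of the Jacobian of the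
discretized map at the interior fixed point, so every root has modulus less than 1. -/
theorem discretized_interior_stable
    (r K α h d θ c s m S s₄ s₅ xs G H : ℝ)
    (hr : 0 < r) (hK : 0 < K) (hα : 0 < α) (hh : 0 < h) (hd : 0 < d)
    (hθ0 : 0 < θ) (hθlt : θ < 1) (hc0 : 0 < c) (hclt : c < 1)
    (hθ1 : θ > h * d + d / (α * K))
    (hθ2 : θ > h * d * (α * K * h + 1) / (α * K * h - 1))
    (hα' : α > 1 / (K * h))
    (hc2 : c > 1 - (θ + h * d) / (α * K * h * (θ - h * d)))
    (hc1 : c < 1 - d / (α * K * (θ - h * d)))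
    (hs : 0 < s) (hm0 : 0 < m) (hm1 : m ≤ 1)
    (hS : S = s ^ m / (m * Real.Gamma m))
    (hxs : xs = d / (α * (1 - c) * (θ - h * d)))
    (hG : G = (r * xs / (K * θ)) * (θ + h * d - α * h * K * (1 - c) * (θ - h * d)))
    (hH : H = (r * xs * (θ - h * d) / (K * θ)) * (α * K * (1 - c) * (θ - h * d) - d))
    (hs₄ : s₄ = (m * Real.Gamma m * G / H) ^ (1 / m))
    (hs₅ : s₅ = (2 * m * Real.Gamma m / G) ^ (1 / m))
    (hsmin : s < min s₄ s₅) :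
    1 - (1 - S * G + S ^ 2 * H) > 0 ∧
    1 - (2 - S * G) + (1 - S * G + S ^ 2 * H) > 0 ∧
    1 + (2 - S * G) + (1 - S * G + S ^ 2 * H) > 0 ∧
    ∀ z : ℂ, z ^ 2 - ((2 - S * G : ℝ) : ℂ) * z + ((1 - S * G + S ^ 2 * H : ℝ) : ℂ) = 0 →
      ‖z‖ < 1 := by
  have hΓ : 0 < Real.Gamma m := Real.Gamma_pos_of_pos hm0
  have hP : 0 < m * Real.Gamma m := by positivity
  have hdαK : 0 < d / (α * K) := by positivity
  have hθhd : 0 < θ - h * d := by linarith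
  have h1c : 0 < 1 - c := by linarith
  have hxs0 : 0 < xs := by rw [hxs]; positivity
  have hKθ : 0 < K * θ := by positivity
  have hden2 : 0 < α * K * h * (θ - h * d) := by positivity
  have hGfac : 0 < θ + h * d - α * h * K * (1 - c) * (θ - h * d) := by
    have h2 : (1 - c) * (α * K * h * (θ - h * d)) < θ + h * d := by
      have h3 : 1 - c < (θ + h * d) / (α * K * h * (θ - h * d)) := by linarith
      calc (1 - c) * (α * K * h * (θ - h * d))
          < ((θ + h * d) / (α * K * h * (θ - h * d))) * (α * K * h * (θ - h * d)) := by
            exact mul_lt_mul_of_pos_right h3 hden2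
        _ = θ + h * d := by field_simp
    have he : α * h * K * (1 - c) * (θ - h * d) = (1 - c) * (α * K * h * (θ - h * d)) := by ring
    linarith [h2, he.le, he.ge]
  have hG0 : 0 < G := by
    rw [hG]; exact mul_pos (div_pos (mul_pos hr hxs0) hKθ) hGfac
  have hden3 : 0 < α * K * (θ - h * d) := by positivity
  have hHfac : 0 < α * K * (1 - c) * (θ - h * d) - d := by
    have h3 : d / (α * K * (θ - h * d)) < 1 - c := by linarith
    have h2 : d < (1 - c) * (α * K * (θ - h * d)) := by
      calc d = (d / (α * K * (θ - h * d))) * (α * K * (θ - h * d)) := by rw [div_mul_cancel₀ _ hden3.ne']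
        _ < (1 - c) * (α * K * (θ - h * d)) := mul_lt_mul_of_pos_right h3 hden3
    have he : α * K * (1 - c) * (θ - h * d) = (1 - c) * (α * K * (θ - h * d)) := by ring
    linarith [h2, he.le, he.ge]
  have hH0 : 0 < H := by
    rw [hH]; exact mul_pos (div_pos (mul_pos (mul_pos hr hxs0) hθhd) hKθ) hHfac
  have hsm : 0 < s ^ m := Real.rpow_pos_of_pos hs m
  have hS0 : 0 < S := by rw [hS]; positivity
  have hb4 : s ^ m < m * Real.Gamma m * G / H := by
    have hA : 0 < m * Real.Gamma m * G / H := by positivity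
    have h1 : s ^ m < ((m * Real.Gamma m * G / H) ^ (1 / m)) ^ m := by
      apply Real.rpow_lt_rpow hs.le _ hm0
      rw [← hs₄]; exact lt_of_lt_of_le hsmin (min_le_left _ _)
    rwa [← Real.rpow_mul hA.le, one_div_mul_cancel hm0.ne', Real.rpow_one] at h1
  have hb5 : s ^ m < 2 * m * Real.Gamma m / G := by
    have hA : 0 < 2 * m * Real.Gamma m / G := by positivity
    have h1 : s ^ m < ((2 * m * Real.Gamma m / G) ^ (1 / m)) ^ m := by
      apply Real.rpow_lt_rpow hs.le _ hm0
      rw [← hs₅]; exact lt_of_lt_of_le hsmin (min_le_right _ _)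
    rwa [← Real.rpow_mul hA.le, one_div_mul_cancel hm0.ne', Real.rpow_one] at h1
  have hSH : S * H < G := by
    rw [hS, div_mul_eq_mul_div, div_lt_iff₀ hP]
    calc s ^ m * H < (m * Real.Gamma m * G / H) * H := mul_lt_mul_of_pos_right hb4 hH0
      _ = G * (m * Real.Gamma m) := by field_simp
  have hSG2 : S * G < 2 := by
    rw [hS, div_mul_eq_mul_div, div_lt_iff₀ hP]
    calc s ^ m * G < (2 * m * Real.Gamma m / G) * G := mul_lt_mul_of_pos_right hb5 hG0
      _ = 2 * (m * Real.Gamma m) := by field_simp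
  have hSSH : 0 < S * (S * H) := mul_pos hS0 (mul_pos hS0 hH0)
  have heSSH : S * (S * H) = S ^ 2 * H := by ring
  have hJ1 : 1 - (1 - S * G + S ^ 2 * H) > 0 := by
    have h0 : 0 < S * (G - S * H) := mul_pos hS0 (by linarith)
    have he : S * (G - S * H) = 1 - (1 - S * G + S ^ 2 * H) := by ring
    linarith [he.le, he.ge]
  have hJ2 : 1 - (2 - S * G) + (1 - S * G + S ^ 2 * H) > 0 := by
    linarith [heSSH.le, heSSH.ge]
  have hJ3 : 1 + (2 - S * G) + (1 - S * G + S ^ 2 * H) > 0 := by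
    linarith [heSSH.le, heSSH.ge]
  exact ⟨hJ1, hJ2, hJ3, jury_aux _ _ (by linarith) hJ2 hJ3⟩
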